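/- arXiv:1011.3208 — 5 statements merged into one kernel-verified Lean document; each statement's English description precedes it below -/
import Mathlib

section
/- Let G = (V, E) be a finite simple graph, let p be a generic configuration of G in ℝ^d such that the framework (G, p) is infinitesimally rigid, and let e ∈ E. Then the framework (G − e, p), where G − e is G with the edge e deleted, is infinitesimally rigid if and only if for every r ∈ ℝ there exists an equilibrium stress ω of (G, p) with ω(e) = r (equivalently, if and only if there exists an equilibrium stress ω of (G, p) with ω(e) ≠ 0). -/
open scoped Classical

noncomputable section

/-- Two configurations are equivalent if corresponding edge lengths agree. -/
def Equivalent {d : ℕ} {V : Type*} (G : SimpleGraph V)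
    (p q : V → EuclideanSpace ℝ (Fin d)) : Prop :=
  ∀ u v, G.Adj u v → ‖p u - p v‖ = ‖q u - q v‖

/-- Two configurations are congruent if all pairwise distances agree. -/
def ConfigCongruent {d : ℕ} {V : Type*} (p q : V → EuclideanSpace ℝ (Fin d)) : Prop :=
  ∀ u v, ‖p u - p v‖ = ‖q u - q v‖

/-- A configuration is generic if the coordinates of its points are
algebraically independent over `ℚ`. -/
def Generic {d : ℕ} {V : Type*} (p : V → EuclideanSpace ℝ (Fin d)) : Prop :=
  AlgebraicIndependent ℚ (fun x : V × Fin d => p x.1 x.2)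

/-- A framework `(G, p)` is locally rigid if all equivalent configurations
sufficiently close to `p` are congruent to `p`. -/
def LocallyRigid {d : ℕ} {V : Type*} (G : SimpleGraph V)
    (p : V → EuclideanSpace ℝ (Fin d)) : Prop :=
  ∃ ε > 0, ∀ q, Equivalent G p q → (∀ v, ‖q v - p v‖ < ε) → ConfigCongruent p q

/-- Generic local rigidity in `ℝ^d`. -/
def GLR (d : ℕ) {V : Type*} (G : SimpleGraph V) : Prop :=
  ∀ p : V → EuclideanSpace ℝ (Fin d), Generic p → LocallyRigid G p

/-- Generic global rigidity in `ℝ^d`. -/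
def GGR (d : ℕ) {V : Type*} (G : SimpleGraph V) : Prop :=
  ∀ p : V → EuclideanSpace ℝ (Fin d), Generic p →
    ∀ q, Equivalent G p q → ConfigCongruent p q

/-- Generic redundant rigidity in `ℝ^d`: deleting any edge leaves a GLR graph. -/
def GRR (d : ℕ) {V : Type*} (G : SimpleGraph V) : Prop :=
  ∀ e ∈ G.edgeSet, GLR d (G.deleteEdges {e})

/-- `G` is `k`-connected: at least `k+1` vertices, and removing any at most
`k-1` vertices leaves a connected induced subgraph. -/
def KConnected (k : ℕ) {V : Type*} [Fintype V] (G : SimpleGraph V) : Prop :=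
  k + 1 ≤ Fintype.card V ∧
    ∀ S : Finset V, S.card ≤ k - 1 → (G.induce ((↑S : Set V)ᶜ)).Connected

/-- The join `G + H` of two graphs: all edges of `G`, all edges of `H`, and
all cross edges. -/
def graphJoin {α β : Type*} (G : SimpleGraph α) (H : SimpleGraph β) :
    SimpleGraph (α ⊕ β) :=
  SimpleGraph.fromRel (fun x y =>
    (∃ a b, x = Sum.inl a ∧ y = Sum.inl b ∧ G.Adj a b) ∨
    (∃ a b, x = Sum.inr a ∧ y = Sum.inr b ∧ H.Adj a b) ∨
    (x.isLeft ∧ y.isRight))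

/-- The disjoint union `G ∪ H` of two graphs. -/
def disjUnion {α β : Type*} (G : SimpleGraph α) (H : SimpleGraph β) :
    SimpleGraph (α ⊕ β) :=
  SimpleGraph.fromRel (fun x y =>
    (∃ a b, x = Sum.inl a ∧ y = Sum.inl b ∧ G.Adj a b) ∨
    (∃ a b, x = Sum.inr a ∧ y = Sum.inr b ∧ H.Adj a b))

/-- Apply a `d × d` matrix to a point of `ℝ^d`. -/
def matApply {d : ℕ} (A : Matrix (Fin d) (Fin d) ℝ)
    (x : EuclideanSpace ℝ (Fin d)) : EuclideanSpace ℝ (Fin d) :=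
  WithLp.toLp 2 (fun i => ∑ j, A i j * x j)

/-- An infinitesimal motion of a framework. -/
def IsInfinitesimalMotion {d : ℕ} {V : Type*} (G : SimpleGraph V)
    (p p' : V → EuclideanSpace ℝ (Fin d)) : Prop :=
  ∀ u v, G.Adj u v → inner ℝ (p u - p v) (p' u - p' v) = (0 : ℝ)

/-- A trivial motion: `p' v = S (p v) + b` for a skew-symmetric matrix `S`. -/
def IsTrivialMotion {d : ℕ} {V : Type*}
    (p p' : V → EuclideanSpace ℝ (Fin d)) : Prop :=
  ∃ (S : Matrix (Fin d) (Fin d) ℝ) (b : EuclideanSpace ℝ (Fin d)),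
    S.transpose = -S ∧ ∀ v, p' v = matApply S (p v) + b

/-- A framework is infinitesimally rigid if every infinitesimal motion is trivial. -/
def InfinitesimallyRigid {d : ℕ} {V : Type*} (G : SimpleGraph V)
    (p : V → EuclideanSpace ℝ (Fin d)) : Prop :=
  ∀ p', IsInfinitesimalMotion G p p' → IsTrivialMotion p p'

/-- An equilibrium stress: a real number on each edge (zero off edges) with the
equilibrium condition at each vertex. -/
def IsEquilibriumStress {d : ℕ} {V : Type*} [Fintype V] (G : SimpleGraph V)
    (p : V → EuclideanSpace ℝ (Fin d)) (ω : Sym2 V → ℝ) : Prop :=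
  (∀ e, e ∉ G.edgeSet → ω e = 0) ∧
  ∀ v, ∑ u ∈ G.neighborFinset v, ω s(u, v) • (p v - p u) = 0

/-- The point `x` lies on the quadric `(A, c, D)`:
`xᵀ A x + 2⟨c, x⟩ + D = 0`. -/
def OnQuadric {d : ℕ} (A : Matrix (Fin d) (Fin d) ℝ) (c : EuclideanSpace ℝ (Fin d))
    (D : ℝ) (x : EuclideanSpace ℝ (Fin d)) : Prop :=
  (∑ i, ∑ j, x i * A i j * x j) + 2 * (∑ i, c i * x i) + D = 0

/-- The polarized quadric constraint for a pair of points: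
`xᵀ A y + ⟨c, x + y⟩ + D = 0`. -/
def PolarConstraint {d : ℕ} (A : Matrix (Fin d) (Fin d) ℝ)
    (c : EuclideanSpace ℝ (Fin d)) (D : ℝ) (x y : EuclideanSpace ℝ (Fin d)) : Prop :=
  (∑ i, ∑ j, x i * A i j * y j) + (∑ i, c i * (x i + y i)) + D = 0

section AuxRigidity

variable {d : ℕ} {V : Type*}

/-- The edge constraint functional for an ordered pair of vertices. -/
def pairF (p : V → EuclideanSpace ℝ (Fin d)) (u v : V) :
    (V → EuclideanSpace ℝ (Fin d)) →ₗ[ℝ] ℝ where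
  toFun x := inner ℝ (p u - p v) (x u - x v)
  map_add' x y := by
    simp only [Pi.add_apply, add_sub_add_comm, inner_add_right]
  map_smul' c x := by
    simp only [Pi.smul_apply, ← smul_sub, inner_smul_right, RingHom.id_apply, smul_eq_mul]

lemma pairF_apply (p : V → EuclideanSpace ℝ (Fin d)) (u v : V) (x) :
    pairF p u v x = inner ℝ (p u - p v) (x u - x v) := rfl

lemma pairF_comm (p : V → EuclideanSpace ℝ (Fin d)) (u v : V) :
    pairF p u v = pairF p v u := by
  ext x
  simp only [pairF_apply]
  rw [← neg_sub (p v) (p u), ← neg_sub (x v) (x u), inner_neg_neg]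

/-- The edge constraint functional for an unordered pair. -/
def edgeF (p : V → EuclideanSpace ℝ (Fin d)) : Sym2 V →
    ((V → EuclideanSpace ℝ (Fin d)) →ₗ[ℝ] ℝ) :=
  Sym2.lift ⟨fun u v => pairF p u v, fun u v => pairF_comm p u v⟩

lemma edgeF_mk (p : V → EuclideanSpace ℝ (Fin d)) (u v : V) :
    edgeF p s(u, v) = pairF p u v := rfl

lemma inner_matApply_skew {S : Matrix (Fin d) (Fin d) ℝ} (hS : S.transpose = -S)
    (y : EuclideanSpace ℝ (Fin d)) : (inner ℝ y (matApply S y) : ℝ) = 0 := by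
  have hS' : ∀ i j, S j i = -S i j := by
    intro i j
    have := congrFun (congrFun hS i) j
    simpa [Matrix.transpose_apply] using this
  have h1 : (inner ℝ y (matApply S y) : ℝ) = ∑ i, ∑ j, y i * (S i j * y j) := by
    simp [PiLp.inner_apply, matApply, RCLike.inner_apply, Finset.mul_sum]
    refine Finset.sum_congr rfl fun i _ => by rw [Finset.sum_mul]; exact Finset.sum_congr rfl fun j _ => by ring
  have h2 : ∑ i, ∑ j, y i * (S i j * y j) = -∑ i, ∑ j, y i * (S i j * y j) := by
    conv_lhs => rw [Finset.sum_comm]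
    rw [← Finset.sum_neg_distrib]
    refine Finset.sum_congr rfl fun i _ => ?_
    rw [← Finset.sum_neg_distrib]
    refine Finset.sum_congr rfl fun j _ => ?_
    rw [hS' i j]; ring
  rw [h1]; linarith
lemma matApply_sub (S : Matrix (Fin d) (Fin d) ℝ) (a b : EuclideanSpace ℝ (Fin d)) :
    matApply S a - matApply S b = matApply S (a - b) := by
  ext i
  simp [matApply, mul_sub, Finset.sum_sub_distrib]

lemma trivialMotion_pairF {p x : V → EuclideanSpace ℝ (Fin d)}
    (h : IsTrivialMotion p x) (u v : V) : pairF p u v x = 0 := by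
  obtain ⟨S, b, hS, hx⟩ := h
  rw [pairF_apply, hx, hx, add_sub_add_comm, sub_self, add_zero, matApply_sub]
  exact inner_matApply_skew hS _

lemma motion_of_edgeF {G : SimpleGraph V} {p x : V → EuclideanSpace ℝ (Fin d)}
    (h : ∀ e ∈ G.edgeSet, edgeF p e x = 0) : IsInfinitesimalMotion G p x :=
  fun u v huv => h s(u, v) ((SimpleGraph.mem_edgeSet G).2 huv)
lemma sum_adj_pairs [Fintype V] (G : SimpleGraph V) (f : Sym2 V → ℝ) :
    ∑ v : V, ∑ u : V, (if G.Adj v u then f s(u, v) else 0)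
      = 2 * ∑ e' ∈ G.edgeFinset, f e' := by
  classical
  have h1 : ∑ v : V, ∑ u : V, (if G.Adj v u then f s(u, v) else 0)
      = ∑ z ∈ (Finset.univ ×ˢ Finset.univ).filter (fun z : V × V => G.Adj z.1 z.2),
          f s(z.1, z.2) := by
    rw [Finset.sum_filter, ← Finset.sum_product']
    refine Finset.sum_congr rfl fun z _ => ?_
    rw [Sym2.eq_swap]
  have hmaps : ∀ z ∈ (Finset.univ ×ˢ Finset.univ).filter (fun z : V × V => G.Adj z.1 z.2),
      s(z.1, z.2) ∈ G.edgeFinset := by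
    intro z hz
    rw [Finset.mem_filter] at hz
    exact SimpleGraph.mem_edgeFinset.2 ((SimpleGraph.mem_edgeSet G).2 hz.2)
  rw [h1, ← Finset.sum_fiberwise_of_maps_to hmaps (fun z : V × V => f s(z.1, z.2))]
  rw [Finset.mul_sum]
  refine Finset.sum_congr rfl fun e' he' => ?_
  revert he'
  induction e' using Sym2.ind with
  | _ a b =>
  intro he'
  have hab : G.Adj a b := (SimpleGraph.mem_edgeSet G).1 (SimpleGraph.mem_edgeFinset.1 he')
  have hne : a ≠ b := G.ne_of_adj hab
  have hfib : ((Finset.univ ×ˢ Finset.univ).filter (fun z : V × V => G.Adj z.1 z.2)).filter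
      (fun z : V × V => s(z.1, z.2) = s(a, b)) = {(a, b), (b, a)} := by
    ext z
    simp only [Finset.mem_filter, Finset.mem_product, Finset.mem_univ, true_and,
      Finset.mem_insert, Finset.mem_singleton, Sym2.eq_iff, Prod.ext_iff]
    constructor
    · rintro ⟨_, (⟨h1, h2⟩ | ⟨h1, h2⟩)⟩
      · exact Or.inl ⟨h1, h2⟩
      · exact Or.inr ⟨h1, h2⟩
    · rintro (⟨h1, h2⟩ | ⟨h1, h2⟩)
      · exact ⟨by rw [h1, h2]; exact hab, Or.inl ⟨h1, h2⟩⟩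
      · exact ⟨by rw [h1, h2]; exact hab.symm, Or.inr ⟨h1, h2⟩⟩
  have hsum : ∀ z ∈ ((Finset.univ ×ˢ Finset.univ).filter
      (fun z : V × V => G.Adj z.1 z.2)).filter (fun z : V × V => s(z.1, z.2) = s(a, b)),
      f s(z.1, z.2) = f s(a, b) := by
    intro z hz
    rw [(Finset.mem_filter.1 hz).2]
  rw [Finset.sum_congr rfl hsum, Finset.sum_const, hfib]
  have hcard : ({(a, b), (b, a)} : Finset (V × V)).card = 2 := by
    rw [Finset.card_insert_of_notMem, Finset.card_singleton]
    simp only [Finset.mem_singleton, Prod.ext_iff, not_and]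
    intro h; exact absurd h hne
  rw [hcard]
  simp [nsmul_eq_mul]
lemma row_inner [Fintype V] (G : SimpleGraph V) (p : V → EuclideanSpace ℝ (Fin d))
    (ω : Sym2 V → ℝ) (v : V) (y : EuclideanSpace ℝ (Fin d)) :
    ∑ u : V, (if G.Adj v u then ω s(u, v) * (inner ℝ (p v - p u) y : ℝ) else 0)
      = inner ℝ (∑ u ∈ G.neighborFinset v, ω s(u, v) • (p v - p u)) y := by
  classical
  rw [sum_inner, SimpleGraph.neighborFinset_eq_filter, Finset.sum_filter]
  refine Finset.sum_congr rfl fun u _ => ?_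
  split
  · rw [real_inner_smul_left]
  · rfl

lemma T2_eq_neg_T1 [Fintype V] (G : SimpleGraph V) (p x : V → EuclideanSpace ℝ (Fin d))
    (ω : Sym2 V → ℝ) :
    ∑ v : V, ∑ u : V, (if G.Adj v u then ω s(u, v) * (inner ℝ (p v - p u) (x u) : ℝ) else 0)
      = -∑ v : V, ∑ u : V, (if G.Adj v u then ω s(u, v) * (inner ℝ (p v - p u) (x v) : ℝ) else 0) := by
  rw [Finset.sum_comm, ← Finset.sum_neg_distrib]
  refine Finset.sum_congr rfl fun a _ => ?_
  rw [← Finset.sum_neg_distrib]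
  refine Finset.sum_congr rfl fun b _ => ?_
  by_cases h : G.Adj a b
  · rw [if_pos h.symm, if_pos h, @Sym2.eq_swap _ b a, ← neg_sub (p a) (p b), inner_neg_left]
    ring
  · rw [if_neg (fun h' => h h'.symm), if_neg h, neg_zero]

lemma Q_eq_two_T1 [Fintype V] (G : SimpleGraph V) (p x : V → EuclideanSpace ℝ (Fin d))
    (ω : Sym2 V → ℝ) :
    ∑ v : V, ∑ u : V, (if G.Adj v u then ω s(u, v) * pairF p v u x else 0)
      = 2 * ∑ v : V, ∑ u : V,
          (if G.Adj v u then ω s(u, v) * (inner ℝ (p v - p u) (x v) : ℝ) else 0) := by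
  have hsplit : ∀ v u : V, (if G.Adj v u then ω s(u, v) * pairF p v u x else 0)
      = (if G.Adj v u then ω s(u, v) * (inner ℝ (p v - p u) (x v) : ℝ) else 0)
        - (if G.Adj v u then ω s(u, v) * (inner ℝ (p v - p u) (x u) : ℝ) else 0) := by
    intro v u
    by_cases h : G.Adj v u
    · rw [if_pos h, if_pos h, if_pos h, pairF_apply, inner_sub_right]
      ring
    · rw [if_neg h, if_neg h, if_neg h, sub_zero]
  simp_rw [hsplit, Finset.sum_sub_distrib]
  rw [T2_eq_neg_T1 G p x ω]
  ring
lemma master_identity [Fintype V] (G : SimpleGraph V) (p x : V → EuclideanSpace ℝ (Fin d))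
    (ω : Sym2 V → ℝ) :
    2 * ∑ e' ∈ G.edgeFinset, ω e' * edgeF p e' x
      = 2 * ∑ v : V, (inner ℝ (∑ u ∈ G.neighborFinset v, ω s(u, v) • (p v - p u)) (x v) : ℝ) := by
  rw [← sum_adj_pairs G (fun e' => ω e' * edgeF p e' x)]
  have h : ∀ v u : V, (if G.Adj v u then ω s(u, v) * edgeF p s(u, v) x else 0)
      = (if G.Adj v u then ω s(u, v) * pairF p v u x else 0) := by
    intro v u; rw [edgeF_mk, pairF_comm]
  simp_rw [h]
  rw [Q_eq_two_T1]
  congr 1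
  exact Finset.sum_congr rfl fun v _ => row_inner G p ω v (x v)

lemma stress_sum_zero [Fintype V] {G : SimpleGraph V} {p : V → EuclideanSpace ℝ (Fin d)}
    {ω : Sym2 V → ℝ} (hω : IsEquilibriumStress G p ω) (x : V → EuclideanSpace ℝ (Fin d)) :
    ∑ e' ∈ G.edgeFinset, ω e' * edgeF p e' x = 0 := by
  have h := master_identity G p x ω
  have h2 : ∀ v : V, (inner ℝ (∑ u ∈ G.neighborFinset v, ω s(u, v) • (p v - p u)) (x v) : ℝ) = 0 := by
    intro v; rw [hω.2 v, inner_zero_left]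
  rw [Finset.sum_congr rfl (fun v _ => h2 v), Finset.sum_const, smul_zero, mul_zero] at h
  linarith

lemma sum_zero_stress [Fintype V] {G : SimpleGraph V} {p : V → EuclideanSpace ℝ (Fin d)}
    {ω : Sym2 V → ℝ}
    (h : ∀ x : V → EuclideanSpace ℝ (Fin d), ∑ e' ∈ G.edgeFinset, ω e' * edgeF p e' x = 0)
    (v : V) : ∑ u ∈ G.neighborFinset v, ω s(u, v) • (p v - p u) = 0 := by
  classical
  set Ev := ∑ u ∈ G.neighborFinset v, ω s(u, v) • (p v - p u) with hEv
  set x : V → EuclideanSpace ℝ (Fin d) := fun w => if w = v then Ev else 0 with hx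
  have hm := master_identity G p x ω
  rw [h x, mul_zero] at hm
  have hsum : ∑ w : V, (inner ℝ (∑ u ∈ G.neighborFinset w, ω s(u, w) • (p w - p u)) (x w) : ℝ)
      = inner ℝ Ev Ev := by
    rw [Finset.sum_eq_single v]
    · simp [hx, hEv]
    · intro w _ hw
      have : x w = 0 := by rw [hx]; simp only [if_neg hw]
      rw [this, inner_zero_right]
    · intro habs; exact absurd (Finset.mem_univ v) habs
  rw [hsum] at hm
  have : (inner ℝ Ev Ev : ℝ) = 0 := by linarith
  exact inner_self_eq_zero.1 this
lemma trivialMotion_edgeF {p x : V → EuclideanSpace ℝ (Fin d)}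
    (h : IsTrivialMotion p x) (e : Sym2 V) : edgeF p e x = 0 := by
  induction e using Sym2.ind with
  | _ u v => exact trivialMotion_pairF h u v

lemma stress_imp_rigid [Fintype V] {G : SimpleGraph V} {p : V → EuclideanSpace ℝ (Fin d)}
    (hrig : InfinitesimallyRigid G p) {e : Sym2 V} (he : e ∈ G.edgeSet)
    {ω : Sym2 V → ℝ} (hω : IsEquilibriumStress G p ω) (hne : ω e ≠ 0) :
    InfinitesimallyRigid (G.deleteEdges {e}) p := by
  classical
  intro x hx
  have hkill : ∀ e' ∈ G.edgeSet, e' ≠ e → edgeF p e' x = 0 := by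
    intro e' he' hne'
    revert he' hne'
    induction e' using Sym2.ind with
    | _ u v =>
    intro he' hne'
    have hadj : (G.deleteEdges {e}).Adj u v := by
      rw [SimpleGraph.deleteEdges_adj]
      exact ⟨(SimpleGraph.mem_edgeSet G).1 he', by simpa using hne'⟩
    exact hx u v hadj
  have hsum := stress_sum_zero hω x
  rw [← Finset.insert_erase (SimpleGraph.mem_edgeFinset.2 he),
    Finset.sum_insert (Finset.notMem_erase e _)] at hsum
  have hrest : ∑ e' ∈ G.edgeFinset.erase e, ω e' * edgeF p e' x = 0 := by
    refine Finset.sum_eq_zero fun e' he' => ?_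
    rw [hkill e' (SimpleGraph.mem_edgeFinset.1 (Finset.mem_erase.1 he').2)
      (Finset.mem_erase.1 he').1, mul_zero]
  rw [hrest, add_zero] at hsum
  have hz : edgeF p e x = 0 := by
    rcases mul_eq_zero.1 hsum with h | h
    · exact absurd h hne
    · exact h
  refine hrig x (motion_of_edgeF fun e' he' => ?_)
  by_cases hcase : e' = e
  · rw [hcase]; exact hz
  · exact hkill e' he' hcase

lemma rigid_imp_stress [Fintype V] {G : SimpleGraph V} {p : V → EuclideanSpace ℝ (Fin d)}
    {e : Sym2 V} (he : e ∈ G.edgeSet)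
    (hdel : InfinitesimallyRigid (G.deleteEdges {e}) p) (r : ℝ) :
    ∃ ω, IsEquilibriumStress G p ω ∧ ω e = r := by
  classical
  set s := G.edgeFinset.erase e with hs
  set L : {e' // e' ∈ s} → ((V → EuclideanSpace ℝ (Fin d)) →ₗ[ℝ] ℝ) :=
    fun i => edgeF p i.1 with hL
  have hker : ⨅ i, LinearMap.ker (L i) ≤ LinearMap.ker (edgeF p e) := by
    intro x hxk
    simp only [Submodule.mem_iInf, LinearMap.mem_ker] at hxk
    have hmot : IsInfinitesimalMotion (G.deleteEdges {e}) p x := by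
      intro u v huv
      rw [SimpleGraph.deleteEdges_adj] at huv
      have hmem : s(u, v) ∈ s := Finset.mem_erase.2
        ⟨by simpa using huv.2, SimpleGraph.mem_edgeFinset.2 ((SimpleGraph.mem_edgeSet G).2 huv.1)⟩
      exact hxk ⟨_, hmem⟩
    rw [LinearMap.mem_ker]
    exact trivialMotion_edgeF (hdel x hmot) e
  obtain ⟨c, hc⟩ := (Submodule.mem_span_range_iff_exists_fun (R := ℝ)).1 (mem_span_of_iInf_ker_le_ker hker)
  set ω0 : Sym2 V → ℝ := fun z => if hz : z ∈ s then c ⟨z, hz⟩ else if z = e then -1 else 0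
    with hω0
  have henotins : e ∉ s := Finset.notMem_erase e _
  have hωe : ω0 e = -1 := by
    rw [hω0]
    simp only [dif_neg henotins]
    simp
  have hsupp : ∀ z, z ∉ G.edgeSet → ω0 z = 0 := by
    intro z hz
    have h1 : z ∉ s := fun hmem => hz (SimpleGraph.mem_edgeFinset.1 (Finset.mem_erase.1 hmem).2)
    have h2 : z ≠ e := fun hze => hz (hze ▸ he)
    simp only [hω0, dif_neg h1, if_neg h2]
  have hzero : ∀ x, ∑ e' ∈ G.edgeFinset, ω0 e' * edgeF p e' x = 0 := by
    intro x
    rw [← Finset.insert_erase (SimpleGraph.mem_edgeFinset.2 he),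
      Finset.sum_insert (Finset.notMem_erase e _), ← hs]
    have hrest : ∑ e' ∈ s, ω0 e' * edgeF p e' x = ∑ i : {e' // e' ∈ s}, c i * L i x := by
      rw [Finset.univ_eq_attach, ← Finset.sum_attach s (fun e' => ω0 e' * edgeF p e' x)]
      refine Finset.sum_congr rfl fun i _ => ?_
      simp only [hω0, dif_pos i.2, hL]
    have happ : ∑ i : {e' // e' ∈ s}, c i * L i x = edgeF p e x := by
      have := LinearMap.congr_fun hc x
      simpa [LinearMap.sum_apply, LinearMap.smul_apply, smul_eq_mul] using this
    rw [hωe, hrest, happ]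
    ring
  have hstress0 : IsEquilibriumStress G p ω0 := ⟨hsupp, sum_zero_stress hzero⟩
  refine ⟨fun z => (-r) * ω0 z, ⟨fun z hz => by show -r * ω0 z = 0; rw [hsupp z hz, mul_zero], fun v => ?_⟩, ?_⟩
  · have := hstress0.2 v
    calc ∑ u ∈ G.neighborFinset v, ((-r) * ω0 s(u, v)) • (p v - p u)
        = (-r) • ∑ u ∈ G.neighborFinset v, ω0 s(u, v) • (p v - p u) := by
          rw [Finset.smul_sum]
          exact Finset.sum_congr rfl fun u _ => (smul_smul (-r) _ _).symm
      _ = 0 := by rw [this, smul_zero]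
  · show -r * ω0 e = r
    rw [hωe]; ring

end AuxRigidity

/-- Proposition (Frank–Jiang): for a generic infinitesimally rigid framework
`(G, p)` and an edge `e`, the framework `(G - e, p)` is infinitesimally rigid
iff every real number is attained on `e` by some equilibrium stress, and
equivalently iff some equilibrium stress is nonzero on `e`. -/
theorem redundant_edge_iff_stress {V : Type*} [Fintype V] (d : ℕ)
    (G : SimpleGraph V) (p : V → EuclideanSpace ℝ (Fin d)) (hp : Generic p)
    (hrig : InfinitesimallyRigid G p) (e : Sym2 V) (he : e ∈ G.edgeSet) :
    (InfinitesimallyRigid (G.deleteEdges {e}) p ↔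
      ∀ r : ℝ, ∃ ω, IsEquilibriumStress G p ω ∧ ω e = r) ∧
    (InfinitesimallyRigid (G.deleteEdges {e}) p ↔
      ∃ ω, IsEquilibriumStress G p ω ∧ ω e ≠ 0) := by
  constructor
  · constructor
    · intro h r
      exact rigid_imp_stress he h r
    · intro h
      obtain ⟨ω, hω, hωe⟩ := h 1
      exact stress_imp_rigid hrig he hω (by rw [hωe]; exact one_ne_zero)
  · constructor
    · intro h
      obtain ⟨ω, hω, hωe⟩ := rigid_imp_stress he h 1
      exact ⟨ω, hω, by rw [hωe]; exact one_ne_zero⟩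
    · rintro ⟨ω, hω, hne⟩
      exact stress_imp_rigid hrig he hω hne

end
end

section
/- Let a, b ≥ d + 2 and suppose the complete bipartite graph K_{a,b} is generically locally rigid in ℝ^d. Then K_{a,b} is generically redundantly rigid in ℝ^d: for every edge e of K_{a,b}, the graph K_{a,b} − e is generically locally rigid in ℝ^d. -/
open scoped Classical

noncomputable section

-- ===== auxiliary lemmas =====

lemma exists_avoid (n m : ℕ) (h : n + 1 ≤ m) (i0 : Fin m) :
    ∃ σ : Fin n → Fin m, Function.Injective σ ∧ ∀ k, σ k ≠ i0 := by
  refine ⟨fun k => if (k : ℕ) < (i0 : ℕ) then ⟨k, by have := k.isLt; omega⟩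
    else ⟨k + 1, by have := k.isLt; omega⟩, ?_, ?_⟩
  · intro k k' hkk'
    have := congrArg Fin.val hkk'
    dsimp only at this
    apply Fin.ext
    split_ifs at this <;> simp at this <;> omega
  · intro k hc
    have := congrArg Fin.val hc
    dsimp only at this
    split_ifs at this <;> simp at this <;> omega

lemma sum_swap_mul {n d : ℕ} (lam : Fin n → ℝ) (x : Fin n → Fin d → ℝ) (y : Fin d → ℝ) :
    ∑ k, lam k * ∑ i, x k i * y i = ∑ i, (∑ k, lam k * x k i) * y i := by
  calc ∑ k, lam k * ∑ i, x k i * y i = ∑ k, ∑ i, lam k * x k i * y i := by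
        simp [Finset.mul_sum, mul_assoc]
    _ = ∑ i, ∑ k, lam k * x k i * y i := Finset.sum_comm
    _ = ∑ i, (∑ k, lam k * x k i) * y i := by simp [Finset.sum_mul]

lemma inner_eq_sum {d : ℕ} (x y : EuclideanSpace ℝ (Fin d)) :
    (inner ℝ x y : ℝ) = ∑ i, x i * y i := by
  simp [PiLp.inner_apply, RCLike.inner_apply, conj_trivial, mul_comm]

lemma sum_mul_inner {d n : ℕ} (lam : Fin n → ℝ) (x : Fin n → EuclideanSpace ℝ (Fin d))
    (z y : EuclideanSpace ℝ (Fin d)) (h : ∀ i, ∑ k, lam k * x k i = z i) :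
    ∑ k, lam k * (inner ℝ (x k) y : ℝ) = (inner ℝ z y : ℝ) := by
  simp only [inner_eq_sum]
  rw [sum_swap_mul]
  exact Finset.sum_congr rfl fun i _ => by rw [h i]

open MvPolynomial in
lemma det_ones_cons_ne_zero {d : ℕ} (x : Fin (d+1) → Fin d → ℝ)
    (hx : AlgebraicIndependent ℚ (fun ki : Fin (d+1) × Fin d => x ki.1 ki.2)) :
    (Matrix.of fun k => Fin.cons (1:ℝ) (x k)).det ≠ 0 := by
  classical
  set P : Matrix (Fin (d+1)) (Fin (d+1)) (MvPolynomial (Fin (d+1) × Fin d) ℚ) :=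
    Matrix.of fun k => Fin.cons 1 (fun i => X (k, i)) with hPdef
  have hP : P.det ≠ 0 := by
    intro h0
    have h1 := congrArg (eval (fun ki : Fin (d+1) × Fin d =>
      if (ki.1 : ℕ) = (ki.2 : ℕ) + 1 then (1:ℚ) else 0)) h0
    rw [map_zero, RingHom.map_det] at h1
    set M := (eval (fun ki : Fin (d+1) × Fin d =>
      if (ki.1 : ℕ) = (ki.2 : ℕ) + 1 then (1:ℚ) else 0)).mapMatrix P with hMdef
    have htri : M.BlockTriangular OrderDual.toDual := by
      intro k l hkl
      have hkl' : (k : ℕ) < (l : ℕ) := hkl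
      refine Fin.cases ?_ ?_ l hkl'
      · intro h; simp at h
      · intro i hi
        have hne : ¬ (k:ℕ) = (i:ℕ)+1 := by simp [Fin.val_succ] at hi; omega
        simp [hMdef, hPdef, RingHom.mapMatrix_apply, Matrix.map_apply, hne]
    have hdiag : ∀ k, M k k = 1 := by
      intro k
      refine Fin.cases ?_ ?_ k <;>
        simp [hMdef, hPdef, RingHom.mapMatrix_apply, Matrix.map_apply]
    rw [Matrix.det_of_lowerTriangular M htri] at h1
    simp [hdiag] at h1
  intro h
  apply hP
  have hinj : Function.Injective (aeval (fun ki : Fin (d+1) × Fin d => x ki.1 ki.2) :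
      MvPolynomial (Fin (d+1) × Fin d) ℚ →ₐ[ℚ] ℝ) := hx
  apply hinj
  rw [map_zero, AlgHom.map_det]
  have hmap : (aeval (fun ki : Fin (d+1) × Fin d => x ki.1 ki.2)).mapMatrix P
      = Matrix.of fun k => Fin.cons (1:ℝ) (x k) := by
    ext k l
    refine Fin.cases ?_ ?_ l <;>
      simp [hPdef, AlgHom.mapMatrix_apply, Matrix.map_apply]
  rw [hmap, h]

lemma key_delete {d a b : ℕ} (ha : d + 2 ≤ a) (hb : d + 2 ≤ b)
    (hGLR : GLR d (completeBipartiteGraph (Fin a) (Fin b))) (i0 : Fin a) (j0 : Fin b) :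
    GLR d ((completeBipartiteGraph (Fin a) (Fin b)).deleteEdges
      {s(Sum.inl i0, Sum.inr j0)}) := by
  intro p hp
  obtain ⟨ε₀, hε₀, hrig⟩ := hGLR p hp
  obtain ⟨σ, hσinj, hσne⟩ := exists_avoid (d+1) a (by omega) i0
  obtain ⟨τ, hτinj, hτne⟩ := exists_avoid (d+1) b (by omega) j0
  -- generic determinant facts
  have hgenA : ∀ ρ : Fin (d+1) → Fin a, Function.Injective ρ →
      (Matrix.of fun k => Fin.cons (1:ℝ) (fun i => p (Sum.inl (ρ k)) i)).det ≠ 0 := by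
    intro ρ hρ
    apply det_ones_cons_ne_zero
    have := hp.comp (fun ki : Fin (d+1) × Fin d =>
        ((Sum.inl (ρ ki.1) : Fin a ⊕ Fin b), ki.2))
      (fun ki ki' hh => by
        obtain ⟨h1, h2⟩ := Prod.mk.injEq .. ▸ hh
        exact Prod.ext (hρ (Sum.inl.injEq .. ▸ h1)) h2)
    exact this
  have hgenB : ∀ ρ : Fin (d+1) → Fin b, Function.Injective ρ →
      (Matrix.of fun k => Fin.cons (1:ℝ) (fun i => p (Sum.inr (ρ k)) i)).det ≠ 0 := by
    intro ρ hρ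
    apply det_ones_cons_ne_zero
    have := hp.comp (fun ki : Fin (d+1) × Fin d =>
        ((Sum.inr (ρ ki.1) : Fin a ⊕ Fin b), ki.2))
      (fun ki ki' hh => by
        obtain ⟨h1, h2⟩ := Prod.mk.injEq .. ▸ hh
        exact Prod.ext (hρ (Sum.inr.injEq .. ▸ h1)) h2)
    exact this
  -- continuity of the A-side determinant
  set Φ : ((Fin a ⊕ Fin b) → EuclideanSpace ℝ (Fin d)) → ℝ :=
    fun r => (Matrix.of fun k => Fin.cons (1:ℝ) (fun i => r (Sum.inl (σ k)) i)).det
    with hΦdef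
  have hΦp : Φ p ≠ 0 := hgenA σ hσinj
  have hΦcont : Continuous Φ := by
    apply Continuous.matrix_det
    apply continuous_matrix
    intro k l
    refine Fin.cases ?_ ?_ l
    · simpa using continuous_const
    · intro i
      simpa [Function.comp_def] using ((EuclideanSpace.proj (𝕜 := ℝ) i).continuous.comp
        (continuous_apply (Sum.inl (σ k) : Fin a ⊕ Fin b)))
  obtain ⟨ε₁, hε₁, hball⟩ : ∃ ε₁ > 0, ∀ r, dist r p < ε₁ → Φ r ≠ 0 := by
    obtain ⟨δ, hδ, hd⟩ := Metric.continuousAt_iff.mp hΦcont.continuousAt (|Φ p|)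
      (abs_pos.mpr hΦp)
    refine ⟨δ, hδ, fun r hr h0 => ?_⟩
    have := hd hr
    rw [h0, Real.dist_eq, zero_sub, abs_neg] at this
    exact lt_irrefl _ this
  refine ⟨min ε₀ ε₁, lt_min hε₀ hε₁, ?_⟩
  intro q hEquiv hclose
  have hqdist : dist q p < ε₁ :=
    (dist_pi_lt_iff hε₁).mpr fun v => by
      rw [dist_eq_norm]; exact lt_of_lt_of_le (hclose v) (min_le_right _ _)
  set N : Matrix (Fin (d+1)) (Fin (d+1)) ℝ :=
    Matrix.of fun k => Fin.cons (1:ℝ) (fun i => q (Sum.inl (σ k)) i) with hNdef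
  have hNdet : N.det ≠ 0 := hball q hqdist
  -- abbreviations
  set PA : Fin a → EuclideanSpace ℝ (Fin d) := fun i => p (Sum.inl i) with hPA
  set PB : Fin b → EuclideanSpace ℝ (Fin d) := fun j => p (Sum.inr j) with hPB
  set QA : Fin a → EuclideanSpace ℝ (Fin d) := fun i => q (Sum.inl i) with hQA
  set QB : Fin b → EuclideanSpace ℝ (Fin d) := fun j => q (Sum.inr j) with hQB
  -- edge equations for all non-deleted edges
  have hPQ : ∀ i j, ¬(i = i0 ∧ j = j0) → ‖PA i - PB j‖ = ‖QA i - QB j‖ := by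
    intro i j hij
    refine hEquiv (Sum.inl i) (Sum.inr j) ?_
    rw [SimpleGraph.deleteEdges_adj]
    constructor
    · simp [completeBipartiteGraph]
    · simp only [Set.mem_singleton_iff, Sym2.eq_iff]
      push_neg
      constructor
      · intro h1 h2
        exact hij ⟨Sum.inl.injEq .. ▸ h1, Sum.inr.injEq .. ▸ h2⟩
      · intro h1; exact absurd h1 (by simp)
  have hedge : ∀ i j, ¬(i = i0 ∧ j = j0) →
      (‖QA i‖^2 - ‖PA i‖^2) + (‖QB j‖^2 - ‖PB j‖^2)
        = 2 * ((inner ℝ (QA i) (QB j) : ℝ) - (inner ℝ (PA i) (PB j) : ℝ)) := by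
    intro i j hij
    have h := congrArg (fun t : ℝ => t^2) (hPQ i j hij)
    rw [norm_sub_sq_real, norm_sub_sq_real] at h
    linarith
  -- the coefficients lam
  set vq : Fin (d+1) → ℝ := Fin.cons (1:ℝ) (fun i => QA i0 i) with hvq
  set lam : Fin (d+1) → ℝ := Matrix.vecMul vq N⁻¹ with hlamdef
  have hlamN : Matrix.vecMul lam N = vq := by
    rw [hlamdef, Matrix.vecMul_vecMul,
      Matrix.nonsing_inv_mul _ (isUnit_iff_ne_zero.mpr hNdet), Matrix.vecMul_one]
  have hcomb : ∀ l, ∑ k, lam k * N k l = vq l := by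
    intro l
    have := congrFun hlamN l
    rw [← this]
    simp [Matrix.vecMul, dotProduct]
  have hsum1 : ∑ k, lam k = 1 := by
    have := hcomb 0
    simpa [hNdef, hvq] using this
  have hsumQ : ∀ i, ∑ k, lam k * QA (σ k) i = QA i0 i := by
    intro i
    have := hcomb i.succ
    simpa [hNdef, hvq] using this
  have hlinQ : ∀ y, ∑ k, lam k * (inner ℝ (QA (σ k)) y : ℝ) = (inner ℝ (QA i0) y : ℝ) :=
    fun y => sum_mul_inner lam (fun k => QA (σ k)) (QA i0) y hsumQ
  -- stress-like quantities
  set F : Fin a → ℝ := fun i => ‖QA i‖^2 - ‖PA i‖^2 with hF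
  set Gg : Fin b → ℝ := fun j => ‖QB j‖^2 - ‖PB j‖^2 with hGg
  set c : ℝ := F i0 - ∑ k, lam k * F (σ k) with hc
  set w : Fin d → ℝ := fun i => PA i0 i - ∑ k, lam k * PA (σ k) i with hw
  have hwip : ∀ j, (inner ℝ (PA i0) (PB j) : ℝ) - ∑ k, lam k * (inner ℝ (PA (σ k)) (PB j) : ℝ)
      = ∑ i, w i * PB j i := by
    intro j
    simp only [inner_eq_sum]
    rw [sum_swap_mul lam (fun k => (PA (σ k) : Fin d → ℝ)) (fun i => PB j i)]
    rw [← Finset.sum_sub_distrib]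
    refine Finset.sum_congr rfl fun i _ => ?_
    rw [hw]
    ring
  have hweighted : ∀ j, (∑ k, lam k * F (σ k)) + Gg j
      = 2 * ((inner ℝ (QA i0) (QB j) : ℝ) - ∑ k, lam k * (inner ℝ (PA (σ k)) (PB j) : ℝ)) := by
    intro j
    have hA : ∀ k, F (σ k) + Gg j
        = 2 * ((inner ℝ (QA (σ k)) (QB j) : ℝ) - (inner ℝ (PA (σ k)) (PB j) : ℝ)) :=
      fun k => hedge (σ k) j (fun hh => hσne k hh.1)
    have e1 : ∑ k, lam k * (F (σ k) + Gg j) = (∑ k, lam k * F (σ k)) + Gg j := by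
      simp only [mul_add, Finset.sum_add_distrib, ← Finset.sum_mul, hsum1, one_mul]
    have e2 : ∑ k, lam k * (F (σ k) + Gg j)
        = 2 * ((∑ k, lam k * (inner ℝ (QA (σ k)) (QB j) : ℝ))
            - ∑ k, lam k * (inner ℝ (PA (σ k)) (PB j) : ℝ)) := by
      rw [mul_sub, Finset.mul_sum, Finset.mul_sum, ← Finset.sum_sub_distrib]
      refine Finset.sum_congr rfl fun k _ => ?_
      rw [hA k]
      ring
    rw [← e1, e2, hlinQ]
  have hrow : ∀ j, j ≠ j0 → c + 2 * ∑ i, w i * PB j i = 0 := by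
    intro j hj
    have hB := hedge i0 j (fun hh => hj hh.2)
    have h1 := hweighted j
    have h2 := hwip j
    have hFi : F i0 = ‖QA i0‖^2 - ‖PA i0‖^2 := rfl
    have hGj : Gg j = ‖QB j‖^2 - ‖PB j‖^2 := rfl
    rw [hc]
    linarith
  -- conclude c = 0 and w = 0 using the generic B-side matrix
  set Mp : Matrix (Fin (d+1)) (Fin (d+1)) ℝ :=
    Matrix.of fun m => Fin.cons (1:ℝ) (fun i => PB (τ m) i) with hMpdef
  have hMp : Mp.det ≠ 0 := hgenB τ hτinj
  set u : Fin (d+1) → ℝ := Fin.cons c (fun i => 2 * w i) with hu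
  have hMu : Matrix.mulVec Mp u = 0 := by
    funext m
    have hr := hrow (τ m) (hτne m)
    have h2 : ∑ i, PB (τ m) i * (2 * w i) = 2 * ∑ i, w i * PB (τ m) i := by
      rw [Finset.mul_sum]
      exact Finset.sum_congr rfl fun i _ => by ring
    simp only [Matrix.mulVec, dotProduct, hMpdef, hu, Matrix.of_apply,
      Fin.sum_univ_succ, Fin.cons_zero, Fin.cons_succ, one_mul, Pi.zero_apply]
    rw [h2]
    linarith
  have hu0 : u = 0 := by
    have h1 : Matrix.mulVec Mp⁻¹ (Matrix.mulVec Mp u) = Matrix.mulVec Mp⁻¹ 0 := by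
      rw [hMu]
    rwa [Matrix.mulVec_mulVec, Matrix.nonsing_inv_mul _ (isUnit_iff_ne_zero.mpr hMp),
      Matrix.one_mulVec, Matrix.mulVec_zero] at h1
  have hc0 : c = 0 := by
    have := congrFun hu0 0
    simpa [hu] using this
  have hw0 : ∀ i, w i = 0 := by
    intro i
    have := congrFun hu0 i.succ
    simp [hu] at this
    linarith
  have hsumP : ∀ i, ∑ k, lam k * PA (σ k) i = PA i0 i := by
    intro i
    have := hw0 i
    rw [hw] at this
    dsimp only at this
    linarith
  have hlinP : ∀ y, ∑ k, lam k * (inner ℝ (PA (σ k)) y : ℝ) = (inner ℝ (PA i0) y : ℝ) :=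
    fun y => sum_mul_inner lam (fun k => PA (σ k)) (PA i0) y hsumP
  -- missing edge equation
  have hfinal : F i0 + Gg j0
      = 2 * ((inner ℝ (QA i0) (QB j0) : ℝ) - (inner ℝ (PA i0) (PB j0) : ℝ)) := by
    have h1 := hweighted j0
    rw [hlinP] at h1
    have h2 : F i0 = ∑ k, lam k * F (σ k) := by
      have := hc0; rw [hc] at this; linarith
    linarith
  have hnorm : ‖PA i0 - PB j0‖ = ‖QA i0 - QB j0‖ := by
    have h1 : ‖PA i0 - PB j0‖^2 = ‖QA i0 - QB j0‖^2 := by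
      rw [norm_sub_sq_real, norm_sub_sq_real]
      have hFi : F i0 = ‖QA i0‖^2 - ‖PA i0‖^2 := by rw [hF]
      have hGj : Gg j0 = ‖QB j0‖^2 - ‖PB j0‖^2 := by rw [hGg]
      linarith
    have := congrArg Real.sqrt h1
    rwa [Real.sqrt_sq (norm_nonneg _), Real.sqrt_sq (norm_nonneg _)] at this
  -- full equivalence
  have hEquivFull : Equivalent (completeBipartiteGraph (Fin a) (Fin b)) p q := by
    intro x y hxy
    match x, y with
    | Sum.inl i, Sum.inl i' => simp [completeBipartiteGraph] at hxy
    | Sum.inr j, Sum.inr j' => simp [completeBipartiteGraph] at hxy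
    | Sum.inl i, Sum.inr j =>
      by_cases hij : i = i0 ∧ j = j0
      · obtain ⟨rfl, rfl⟩ := hij
        exact hnorm
      · exact hPQ i j hij
    | Sum.inr j, Sum.inl i =>
      rw [norm_sub_rev (p _), norm_sub_rev (q _)]
      by_cases hij : i = i0 ∧ j = j0
      · obtain ⟨rfl, rfl⟩ := hij
        exact hnorm
      · exact hPQ i j hij
  exact hrig q hEquivFull fun v => lt_of_lt_of_le (hclose v) (min_le_left _ _)

/-- Corollary: if `a, b ≥ d+2` and `K_{a,b}` is generically locally rigid in
`ℝ^d`, then `K_{a,b}` is generically redundantly rigid in `ℝ^d`. -/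
theorem bipartite_GLR_implies_GRR (d a b : ℕ) (ha : d + 2 ≤ a) (hb : d + 2 ≤ b)
    (hGLR : GLR d (completeBipartiteGraph (Fin a) (Fin b))) :
    GRR d (completeBipartiteGraph (Fin a) (Fin b)) := by
  intro e he
  induction e using Sym2.ind with
  | _ x y =>
    rw [SimpleGraph.mem_edgeSet] at he
    match x, y with
    | Sum.inl i, Sum.inl i' => simp [completeBipartiteGraph] at he
    | Sum.inr j, Sum.inr j' => simp [completeBipartiteGraph] at he
    | Sum.inl i, Sum.inr j => exact key_delete ha hb hGLR i j
    | Sum.inr j, Sum.inl i =>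
      rw [Sym2.eq_swap]
      exact key_delete ha hb hGLR i j


end
end

section
/- Let A be a symmetric d×d real matrix, c ∈ ℝ^d, and D ∈ ℝ. Let G + H be a joined graph and p a configuration of G + H in ℝ^d such that every point p v lies on the quadric, i.e., (p v)ᵀ A (p v) + 2⟨c, p v⟩ + D = 0 for all vertices v. Define the quadric flex p' by p' v = A (p v) + c for v ∈ V_G and p' v = −(A (p v) + c) for v ∈ V_H. Then for every g ∈ V_G and h ∈ V_H, ⟨p g − p h, p' g − p' h⟩ = 0; that is, the quadric flex infinitesimally preserves the length of every non-extraneous (cross) edge of G + H. -/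
open scoped Classical

noncomputable section

/-- The quadric flex preserves all non-extraneous (cross) edges of a joined
framework whose points all lie on the quadric `(A, c, D)`. -/
theorem quadric_flex_preserves_cross_edges {α β : Type*} (d : ℕ)
    (A : Matrix (Fin d) (Fin d) ℝ) (hA : A.IsSymm)
    (c : EuclideanSpace ℝ (Fin d)) (D : ℝ)
    (G : SimpleGraph α) (H : SimpleGraph β)
    (p : α ⊕ β → EuclideanSpace ℝ (Fin d))
    (hq : ∀ v, OnQuadric A c D (p v))
    (p' : α ⊕ β → EuclideanSpace ℝ (Fin d))
    (hpl : ∀ a : α, p' (Sum.inl a) = matApply A (p (Sum.inl a)) + c)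
    (hpr : ∀ b : β, p' (Sum.inr b) = -(matApply A (p (Sum.inr b)) + c)) :
    ∀ (g : α) (h : β),
      inner ℝ (p (Sum.inl g) - p (Sum.inr h)) (p' (Sum.inl g) - p' (Sum.inr h)) = (0 : ℝ) := by
  intro g h
  have hx := hq (Sum.inl g)
  have hy := hq (Sum.inr h)
  set x := p (Sum.inl g) with hxdef
  set y := p (Sum.inr h) with hydef
  have hsym : (∑ i, ∑ j, x i * A i j * y j) = ∑ i, ∑ j, y i * A i j * x j := by
    rw [Finset.sum_comm]
    refine Finset.sum_congr rfl fun j _ => Finset.sum_congr rfl fun i _ => ?_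
    have : A i j = A j i := by
      conv_lhs => rw [← hA]
      rfl
    rw [this]; ring
  rw [hpl, hpr]
  simp only [OnQuadric] at hx hy
  have expand : (inner ℝ (x - y) (matApply A x + c - -(matApply A y + c)) : ℝ)
      = ∑ i, ((∑ j, x i * A i j * x j) + (∑ j, x i * A i j * y j) + 2 * (c i * x i)
        - (∑ j, y i * A i j * x j) - (∑ j, y i * A i j * y j) - 2 * (c i * y i)) := by
    rw [PiLp.inner_apply]
    refine Finset.sum_congr rfl fun i _ => ?_
    simp only [RCLike.inner_apply, conj_trivial, PiLp.sub_apply, PiLp.add_apply,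
      PiLp.neg_apply, matApply]
    rw [sub_neg_eq_add]
    rw [mul_comm _ (x i - y i)]
    have h1 : x i * ∑ j, A i j * x j = ∑ j, x i * A i j * x j := by
      rw [Finset.mul_sum]; exact Finset.sum_congr rfl fun j _ => by ring
    have h2 : x i * ∑ j, A i j * y j = ∑ j, x i * A i j * y j := by
      rw [Finset.mul_sum]; exact Finset.sum_congr rfl fun j _ => by ring
    have h3 : y i * ∑ j, A i j * x j = ∑ j, y i * A i j * x j := by
      rw [Finset.mul_sum]; exact Finset.sum_congr rfl fun j _ => by ring
    have h4 : y i * ∑ j, A i j * y j = ∑ j, y i * A i j * y j := by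
      rw [Finset.mul_sum]; exact Finset.sum_congr rfl fun j _ => by ring
    calc (x i - y i) * ((∑ j, A i j * x j) + c i + ((∑ j, A i j * y j) + c i))
        = x i * (∑ j, A i j * x j) + x i * (∑ j, A i j * y j) + 2 * (c i * x i)
          - y i * (∑ j, A i j * x j) - y i * (∑ j, A i j * y j) - 2 * (c i * y i) := by
          ring
      _ = _ := by rw [h1, h2, h3, h4]
  rw [expand]
  simp only [Finset.sum_sub_distrib, Finset.sum_add_distrib, ← Finset.mul_sum]
  linear_combination hx - hy + hsym
end
end

section
/- (Whiteley) Let a, b ≥ d+1 with a + b < (d+2 choose 2), and let p be a generic configuration of the complete bipartite graph K_{a,b} in ℝ^d, with bipartite classes X (|X| = a) and Y (|Y| = b). Then every infinitesimal motion p' of the framework (K_{a,b}, p) is the sum of a trivial motion and a quadric flex: there exist a skew-symmetric d×d real matrix S, a vector b₀ ∈ ℝ^d, a symmetric d×d real matrix A, c ∈ ℝ^d, and D ∈ ℝ such that every point p v lies on the quadric ((p v)ᵀ A (p v) + 2⟨c, p v⟩ + D = 0 for all vertices v), p' v = S (p v) + b₀ + (A (p v) + c) for all v ∈ X, and p' v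 = S (p v) + b₀ − (A (p v) + c) for all v ∈ Y. -/
open scoped Classical

noncomputable section

/-- homogeneous coordinates -/
def hatFn {d : ℕ} (q : EuclideanSpace ℝ (Fin d)) : Fin (d + 1) → ℝ :=
  Fin.snoc (fun i => q i) 1

/-- the velocity/moment vector -/
def alphaFn {d : ℕ} (q q' : EuclideanSpace ℝ (Fin d)) : Fin (d + 1) → ℝ :=
  Fin.snoc (fun i => -q' i) (∑ i, q i * q' i)

lemma hat_det_ne_zero {d : ℕ} {V : Type*} (p : V → EuclideanSpace ℝ (Fin d))
    (hp : Generic p) (f : Fin (d + 1) → V) (hf : Function.Injective f) :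
    (Matrix.of fun k j => hatFn (p (f k)) j).det ≠ 0 := by
  set P : Matrix (Fin (d + 1)) (Fin (d + 1)) (MvPolynomial (V × Fin d) ℚ) :=
    Matrix.of fun k => (Fin.snoc (fun i : Fin d => (MvPolynomial.X (f k, i))) 1 :
      Fin (d + 1) → MvPolynomial (V × Fin d) ℚ) with hP
  have hmap : (P.map (MvPolynomial.aeval fun x : V × Fin d => p x.1 x.2)) =
      Matrix.of fun k j => hatFn (p (f k)) j := by
    ext k j
    refine Fin.lastCases ?_ ?_ j <;> simp [hP, Matrix.map_apply, hatFn]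
  have hPdet : P.det ≠ 0 := by
    intro h
    have h2 := congrArg (MvPolynomial.aeval fun v : V × Fin d =>
      (if v.1 = f (Fin.castSucc v.2) then (1 : ℚ) else 0)) h
    rw [map_zero, AlgHom.map_det, AlgHom.mapMatrix_apply] at h2
    set Q := P.map (MvPolynomial.aeval fun v : V × Fin d =>
      (if v.1 = f (Fin.castSucc v.2) then (1 : ℚ) else 0)) with hQ
    have hQtri : Q.BlockTriangular id := by
      intro k j hkj
      simp only [id] at hkj
      have hjlt : (j : ℕ) < d := lt_of_lt_of_le hkj (Nat.lt_succ_iff.mp k.isLt)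
      have hj : j = Fin.castSucc ⟨j, hjlt⟩ := by simp [Fin.ext_iff]
      have hne : ¬ f k = f j := fun hc => absurd (hf hc).symm (ne_of_lt hkj)
      rw [hj]
      simp only [hQ, hP, Matrix.map_apply, Matrix.of_apply, Fin.snoc_castSucc]
      simp [MvPolynomial.aeval_X, ← hj, hne]
    have hQdiag : ∀ k, Q k k = 1 := by
      intro k
      refine Fin.lastCases ?_ ?_ k
      · simp [hQ, hP]
      · intro i
        simp [hQ, hP]
    rw [Matrix.det_of_upperTriangular hQtri] at h2
    simp [hQdiag] at h2
  intro h
  rw [← hmap, ← AlgHom.mapMatrix_apply, ← AlgHom.map_det] at h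
  exact hPdet (hp (by rw [map_zero]; exact h))

open Matrix in
lemma vec_eq_zero_of_dots {n : Type*} [Fintype n] [DecidableEq n]
    (F : Matrix n n ℝ) (hF : F.det ≠ 0) (u : n → ℝ)
    (h : ∀ k, F k ⬝ᵥ u = 0) : u = 0 := by
  have hu : F *ᵥ u = 0 := by
    funext k; exact h k
  have := congrArg (fun w => F⁻¹ *ᵥ w) hu
  simpa [Matrix.mulVec_mulVec, Matrix.nonsing_inv_mul F (isUnit_iff_ne_zero.mpr hF)] using this

open Matrix in
lemma key_lemma {n : Type*} [Fintype n] [DecidableEq n] {ι κ : Type*}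
    (h : ι → n → ℝ) (g : κ → n → ℝ) (α : ι → n → ℝ) (β : κ → n → ℝ)
    (e : n → ι) (f : n → κ)
    (hE : (Matrix.of fun k j => h (e k) j).det ≠ 0)
    (hF : (Matrix.of fun k j => g (f k) j).det ≠ 0)
    (rel : ∀ x y, g y ⬝ᵥ α x + h x ⬝ᵥ β y = 0) :
    ∃ N : Matrix n n ℝ, (∀ x, α x = h x ᵥ* N) ∧ (∀ y, β y = -(N *ᵥ g y)) := by
  set E : Matrix n n ℝ := Matrix.of fun k j => h (e k) j with hEdef
  set A₀ : Matrix n n ℝ := Matrix.of fun k j => α (e k) j with hAdef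
  set N : Matrix n n ℝ := E⁻¹ * A₀ with hNdef
  have hEN : E * N = A₀ := Matrix.mul_nonsing_inv_cancel_left E A₀ (isUnit_iff_ne_zero.mpr hE)
  have hrowN : ∀ k, h (e k) ᵥ* N = α (e k) := by
    intro k
    funext j
    have := congrFun (congrFun hEN k) j
    simpa [Matrix.mul_apply, Matrix.vecMul, dotProduct, hEdef, hAdef] using this
  have hβ : ∀ y, β y = -(N *ᵥ g y) := by
    intro y
    have hw : (N *ᵥ g y) + β y = 0 := by
      refine vec_eq_zero_of_dots E hE _ (fun k => ?_)
      have h1 : (h (e k)) ⬝ᵥ (N *ᵥ g y) = α (e k) ⬝ᵥ g y := by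
        rw [Matrix.dotProduct_mulVec, hrowN]
      show h (e k) ⬝ᵥ ((N *ᵥ g y) + β y) = 0
      rw [dotProduct_add, h1, dotProduct_comm]
      exact rel (e k) y
    linear_combination (norm := module) hw
  have hα : ∀ x, α x = h x ᵥ* N := by
    intro x
    have hu : α x - h x ᵥ* N = 0 := by
      refine vec_eq_zero_of_dots (Matrix.of fun k j => g (f k) j) hF _ (fun k => ?_)
      have h1 : g (f k) ⬝ᵥ (h x ᵥ* N) = h x ⬝ᵥ (N *ᵥ g (f k)) := by
        rw [Matrix.dotProduct_mulVec, dotProduct_comm]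
      show g (f k) ⬝ᵥ (α x - h x ᵥ* N) = 0
      rw [dotProduct_sub, h1]
      have hbb : N *ᵥ g (f k) = -β (f k) := by rw [hβ (f k), neg_neg]
      rw [hbb, dotProduct_neg]
      have := rel x (f k)
      linarith
    linear_combination (norm := module) hu
  exact ⟨N, hα, hβ⟩

lemma double_symm {d : ℕ} (x : Fin d → ℝ) (B : Matrix (Fin d) (Fin d) ℝ) :
    ∑ i, ∑ j, x i * B j i * x j = ∑ i, ∑ j, x i * B i j * x j := by
  rw [Finset.sum_comm]
  exact Finset.sum_congr rfl fun i _ => Finset.sum_congr rfl fun j _ => by ring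

open Matrix in
lemma vecMul_hat {d : ℕ} (q : EuclideanSpace ℝ (Fin d))
    (N : Matrix (Fin (d + 1)) (Fin (d + 1)) ℝ) (j : Fin (d + 1)) :
    (hatFn q ᵥ* N) j = ∑ k : Fin d, q k * N k.castSucc j + N (Fin.last d) j := by
  simp [Matrix.vecMul, dotProduct, hatFn, Fin.sum_univ_castSucc]

open Matrix in
lemma mulVec_hat {d : ℕ} (q : EuclideanSpace ℝ (Fin d))
    (N : Matrix (Fin (d + 1)) (Fin (d + 1)) ℝ) (j : Fin (d + 1)) :
    (N *ᵥ hatFn q) j = ∑ k : Fin d, N j k.castSucc * q k + N j (Fin.last d) := by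
  simp [Matrix.mulVec, dotProduct, hatFn, Fin.sum_univ_castSucc]

lemma quad_core {d : ℕ} (Mm : Matrix (Fin d) (Fin d) ℝ) (t s : Fin d → ℝ) (ν : ℝ)
    (q : Fin d → ℝ)
    (hq : ∑ i, ∑ j, q i * Mm i j * q j + ∑ i, (t i - s i) * q i - ν = 0) :
    ∑ i, ∑ j, q i * ((Mm i j + Mm j i) / 2) * q j
      + 2 * (∑ i, ((t i - s i) / 2) * q i) + (-ν) = 0 := by
  have hsymm := double_symm q Mm
  have h1 : ∑ i, ∑ j, q i * ((Mm i j + Mm j i) / 2) * q j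
      = (∑ i, ∑ j, q i * Mm i j * q j) / 2 + (∑ i, ∑ j, q i * Mm j i * q j) / 2 := by
    rw [Finset.sum_div, Finset.sum_div, ← Finset.sum_add_distrib]
    refine Finset.sum_congr rfl fun i _ => ?_
    rw [Finset.sum_div, Finset.sum_div, ← Finset.sum_add_distrib]
    exact Finset.sum_congr rfl fun j _ => by ring
  have h2 : 2 * (∑ i, ((t i - s i) / 2) * q i) = ∑ i, (t i - s i) * q i := by
    rw [Finset.mul_sum]
    exact Finset.sum_congr rfl fun i _ => by ring
  rw [h1, h2, hsymm]
  linarith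

open Matrix in
/-- Theorem (Whiteley): for `a, b ≥ d+1` with `a + b < C(d+2, 2)`, every
infinitesimal motion of a generic framework of `K_{a,b}` in `ℝ^d` is the sum
of a trivial motion and a quadric flex. -/
theorem whiteley_flexes (d a b : ℕ) (ha : d + 1 ≤ a) (hb : d + 1 ≤ b)
    (hab : a + b < (d + 2).choose 2)
    (p : Fin a ⊕ Fin b → EuclideanSpace ℝ (Fin d)) (hp : Generic p)
    (p' : Fin a ⊕ Fin b → EuclideanSpace ℝ (Fin d))
    (hm : IsInfinitesimalMotion (completeBipartiteGraph (Fin a) (Fin b)) p p') :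
    ∃ (S : Matrix (Fin d) (Fin d) ℝ) (b₀ : EuclideanSpace ℝ (Fin d))
      (A : Matrix (Fin d) (Fin d) ℝ) (c : EuclideanSpace ℝ (Fin d)) (D : ℝ),
      S.transpose = -S ∧ A.IsSymm ∧
      (∀ v, OnQuadric A c D (p v)) ∧
      (∀ x : Fin a, p' (Sum.inl x) =
        matApply S (p (Sum.inl x)) + b₀ + (matApply A (p (Sum.inl x)) + c)) ∧
      (∀ y : Fin b, p' (Sum.inr y) =
        matApply S (p (Sum.inr y)) + b₀ - (matApply A (p (Sum.inr y)) + c)) := by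
  classical
  have hinjX : Function.Injective
      (fun k : Fin (d + 1) => (Sum.inl (Fin.castLE ha k) : Fin a ⊕ Fin b)) := by
    intro k l hkl
    simpa [Fin.ext_iff] using hkl
  have hinjY : Function.Injective
      (fun k : Fin (d + 1) => (Sum.inr (Fin.castLE hb k) : Fin a ⊕ Fin b)) := by
    intro k l hkl
    simpa [Fin.ext_iff] using hkl
  have hE := hat_det_ne_zero p hp _ hinjX
  have hF := hat_det_ne_zero p hp _ hinjY
  -- the bilinear relation
  have hrel : ∀ (x : Fin a) (y : Fin b),
      hatFn (p (Sum.inr y)) ⬝ᵥ alphaFn (p (Sum.inl x)) (p' (Sum.inl x))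
        + hatFn (p (Sum.inl x)) ⬝ᵥ alphaFn (p (Sum.inr y)) (p' (Sum.inr y)) = 0 := by
    intro x y
    have h0 := hm (Sum.inl x) (Sum.inr y) (by simp)
    rw [PiLp.inner_apply (p (Sum.inl x) - p (Sum.inr y))] at h0
    have h0' : ∑ i, (p (Sum.inl x) i - p (Sum.inr y) i)
        * (p' (Sum.inl x) i - p' (Sum.inr y) i) = 0 := by
      simpa [RCLike.inner_apply, PiLp.sub_apply, mul_comm] using h0
    have hexp : ∀ i, (p (Sum.inl x) i - p (Sum.inr y) i)
          * (p' (Sum.inl x) i - p' (Sum.inr y) i)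
        = (p (Sum.inl x) i * p' (Sum.inl x) i + p (Sum.inr y) i * p' (Sum.inr y) i)
          - (p (Sum.inr y) i * p' (Sum.inl x) i + p (Sum.inl x) i * p' (Sum.inr y) i) :=
      fun i => by ring
    rw [Finset.sum_congr rfl (fun i _ => hexp i), Finset.sum_sub_distrib,
      Finset.sum_add_distrib, Finset.sum_add_distrib] at h0'
    simp only [dotProduct, hatFn, alphaFn, Fin.sum_univ_castSucc,
      Fin.snoc_castSucc, Fin.snoc_last, one_mul, mul_neg]
    have c1 : ∑ i : Fin d, -(p (Sum.inr y) i * p' (Sum.inl x) i)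
        = -∑ i : Fin d, p (Sum.inr y) i * p' (Sum.inl x) i := by
      rw [Finset.sum_neg_distrib]
    have c2 : ∑ i : Fin d, -(p (Sum.inl x) i * p' (Sum.inr y) i)
        = -∑ i : Fin d, p (Sum.inl x) i * p' (Sum.inr y) i := by
      rw [Finset.sum_neg_distrib]
    rw [c1, c2]
    linarith
  obtain ⟨N, hNα, hNβ⟩ := key_lemma
    (fun x : Fin a => hatFn (p (Sum.inl x)))
    (fun y : Fin b => hatFn (p (Sum.inr y)))
    (fun x : Fin a => alphaFn (p (Sum.inl x)) (p' (Sum.inl x)))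
    (fun y : Fin b => alphaFn (p (Sum.inr y)) (p' (Sum.inr y)))
    (fun k => Fin.castLE ha k) (fun k => Fin.castLE hb k) hE hF hrel
  -- extract blocks
  set Mm : Matrix (Fin d) (Fin d) ℝ :=
    Matrix.of fun i j => -N (Fin.castSucc j) (Fin.castSucc i) with hMm
  set t : Fin d → ℝ := fun i => -N (Fin.last d) (Fin.castSucc i) with ht
  set s : Fin d → ℝ := fun i => N (Fin.castSucc i) (Fin.last d) with hs
  set ν : ℝ := N (Fin.last d) (Fin.last d) with hν
  -- component equations, X side
  have hx1 : ∀ (x : Fin a) (i : Fin d),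
      p' (Sum.inl x) i = ∑ k, Mm i k * p (Sum.inl x) k + t i := by
    intro x i
    have h1 := congrFun (hNα x) (Fin.castSucc i)
    rw [vecMul_hat] at h1
    simp only [alphaFn, Fin.snoc_castSucc] at h1
    have hsum : ∑ k, Mm i k * p (Sum.inl x) k
        = -∑ k, p (Sum.inl x) k * N k.castSucc i.castSucc := by
      rw [← Finset.sum_neg_distrib]
      exact Finset.sum_congr rfl fun k _ => by simp [hMm]; ring
    have htI : t i = -N (Fin.last d) i.castSucc := rfl
    rw [hsum]
    linarith
  have hx2 : ∀ x : Fin a, ∑ i, p (Sum.inl x) i * p' (Sum.inl x) i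
      = ∑ k, p (Sum.inl x) k * s k + ν := by
    intro x
    have h1 := congrFun (hNα x) (Fin.last d)
    rw [vecMul_hat] at h1
    simp only [alphaFn, Fin.snoc_last] at h1
    rw [h1]
  -- component equations, Y side
  have hy1 : ∀ (y : Fin b) (i : Fin d),
      p' (Sum.inr y) i = ∑ k, (-Mm k i) * p (Sum.inr y) k + s i := by
    intro y i
    have h1 := congrFun (hNβ y) (Fin.castSucc i)
    rw [Pi.neg_apply, mulVec_hat] at h1
    simp only [alphaFn, Fin.snoc_castSucc] at h1
    have h2 : p' (Sum.inr y) i = ∑ k, N i.castSucc k.castSucc * p (Sum.inr y) k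
        + N i.castSucc (Fin.last d) := by
      have := h1
      linarith [h1]
    rw [h2, hs]
    refine congrArg₂ (· + ·) (Finset.sum_congr rfl fun k _ => ?_) rfl
    simp [hMm]
  have hy2 : ∀ y : Fin b, ∑ i, p (Sum.inr y) i * p' (Sum.inr y) i
      = ∑ k, p (Sum.inr y) k * t k - ν := by
    intro y
    have h1 := congrFun (hNβ y) (Fin.last d)
    rw [Pi.neg_apply, mulVec_hat] at h1
    simp only [alphaFn, Fin.snoc_last] at h1
    rw [h1, neg_add, ← hν]
    rw [sub_eq_add_neg]
    refine congrArg₂ (· + ·) ?_ rfl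
    rw [← Finset.sum_neg_distrib]
    exact Finset.sum_congr rfl fun k _ => by rw [ht]; ring
  -- define the answer
  refine ⟨Matrix.of fun i j => (Mm i j - Mm j i) / 2,
    (WithLp.toLp 2 (fun i => (t i + s i) / 2) : EuclideanSpace ℝ (Fin d)),
    Matrix.of fun i j => (Mm i j + Mm j i) / 2,
    (WithLp.toLp 2 (fun i => (t i - s i) / 2) : EuclideanSpace ℝ (Fin d)), -ν, ?_, ?_, ?_, ?_, ?_⟩
  · ext i j
    simp [Matrix.transpose_apply, Matrix.neg_apply]
    ring
  · unfold Matrix.IsSymm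
    ext i j
    simp [Matrix.transpose_apply]
    ring
  · -- the quadric
    intro v
    have hQv : ∑ i, ∑ j, p v i * Mm i j * p v j + ∑ i, (t i - s i) * p v i - ν = 0 := by
      cases v with
      | inl x =>
        have e1 : ∑ i, p (Sum.inl x) i * p' (Sum.inl x) i
            = ∑ i, (∑ j, p (Sum.inl x) i * Mm i j * p (Sum.inl x) j
              + p (Sum.inl x) i * t i) := by
          refine Finset.sum_congr rfl fun i _ => ?_
          rw [hx1 x i, mul_add, Finset.mul_sum]
          refine congrArg₂ (· + ·) (Finset.sum_congr rfl fun j _ => by ring) rfl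
        rw [Finset.sum_add_distrib] at e1
        have e2 := hx2 x
        rw [e1] at e2
        have e3 : ∑ i, (t i - s i) * p (Sum.inl x) i
            = ∑ i, p (Sum.inl x) i * t i - ∑ i, p (Sum.inl x) i * s i := by
          rw [← Finset.sum_sub_distrib]
          exact Finset.sum_congr rfl fun i _ => by ring
        rw [e3]
        linarith
      | inr y =>
        have e1 : ∑ i, p (Sum.inr y) i * p' (Sum.inr y) i
            = ∑ i, (∑ j, -(p (Sum.inr y) i * Mm j i * p (Sum.inr y) j)
              + p (Sum.inr y) i * s i) := by
          refine Finset.sum_congr rfl fun i _ => ?_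
          rw [hy1 y i, mul_add, Finset.mul_sum]
          refine congrArg₂ (· + ·) (Finset.sum_congr rfl fun j _ => by ring) rfl
        rw [Finset.sum_add_distrib] at e1
        have e2 := hy2 y
        rw [e1] at e2
        have e4 : ∑ i, ∑ j, -(p (Sum.inr y) i * Mm j i * p (Sum.inr y) j)
            = -∑ i, ∑ j, p (Sum.inr y) i * Mm j i * p (Sum.inr y) j := by
          rw [← Finset.sum_neg_distrib]
          exact Finset.sum_congr rfl fun i _ => by rw [Finset.sum_neg_distrib]
        rw [e4, double_symm (fun i => p (Sum.inr y) i) Mm] at e2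
        have e3 : ∑ i, (t i - s i) * p (Sum.inr y) i
            = ∑ i, p (Sum.inr y) i * t i - ∑ i, p (Sum.inr y) i * s i := by
          rw [← Finset.sum_sub_distrib]
          exact Finset.sum_congr rfl fun i _ => by ring
        rw [e3]
        linarith
    have := quad_core Mm t s ν (fun i => p v i) hQv
    unfold OnQuadric
    convert this using 2
    rfl
  · -- X side motion formula
    intro x
    ext i
    show p' (Sum.inl x) i = _
    simp only [matApply, PiLp.add_apply, Matrix.of_apply, WithLp.ofLp_toLp]
    rw [hx1 x i]
    have hsum : (∑ j, ((Mm i j - Mm j i) / 2) * p (Sum.inl x) j)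
        + (∑ j, ((Mm i j + Mm j i) / 2) * p (Sum.inl x) j)
        = ∑ j, Mm i j * p (Sum.inl x) j := by
      rw [← Finset.sum_add_distrib]
      exact Finset.sum_congr rfl fun j _ => by ring
    linarith [hsum]
  · -- Y side motion formula
    intro y
    ext i
    show p' (Sum.inr y) i = _
    simp only [matApply, PiLp.add_apply, PiLp.sub_apply, Matrix.of_apply, WithLp.ofLp_toLp]
    rw [hy1 y i]
    have hsum : (∑ j, ((Mm i j - Mm j i) / 2) * p (Sum.inr y) j)
        - (∑ j, ((Mm i j + Mm j i) / 2) * p (Sum.inr y) j)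
        = ∑ j, (-Mm j i) * p (Sum.inr y) j := by
      rw [← Finset.sum_sub_distrib]
      exact Finset.sum_congr rfl fun j _ => by ring
    linarith [hsum]


end
end

section
/- Let G and G' be finite simple graphs on the same vertex set V with E_{G'} ⊆ E_G (G' is a factor of G), and suppose both G and G' are generically almost-globally rigid in ℝ^d. Then every graph G'' on the vertex set V with E_{G'} ⊆ E_{G''} ⊆ E_G is also generically almost-globally rigid in ℝ^d. -/
open scoped Classical

noncomputable section

/-- Generic almost-global rigidity: `(d+1)`-connected and generically
redundantly rigid in `ℝ^d`, but not generically globally rigid in `ℝ^d`. -/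
def GAGR (d : ℕ) {V : Type*} [Fintype V] (G : SimpleGraph V) : Prop :=
  KConnected (d + 1) G ∧ GRR d G ∧ ¬ GGR d G


private lemma equiv_anti {d : ℕ} {V : Type*} {G H : SimpleGraph V}
    (h : G ≤ H) {p q : V → EuclideanSpace ℝ (Fin d)}
    (he : Equivalent H p q) : Equivalent G p q :=
  fun u v huv => he u v (h huv)

private lemma glr_mono {d : ℕ} {V : Type*} {G H : SimpleGraph V}
    (h : G ≤ H) (hG : GLR d G) : GLR d H := by
  intro p hp
  obtain ⟨ε, hε, hq⟩ := hG p hp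
  exact ⟨ε, hε, fun q heq hcl => hq q (equiv_anti h heq) hcl⟩

private lemma has_edge_of_connected {V : Type*} [Fintype V] {G : SimpleGraph V}
    (hc : (G.induce ((↑(∅ : Finset V) : Set V)ᶜ)).Connected)
    (hcard : 2 ≤ Fintype.card V) : ∃ u v, G.Adj u v := by
  obtain ⟨a, b, hab⟩ := Fintype.exists_pair_of_one_lt_card hcard
  have ha : a ∈ ((↑(∅ : Finset V) : Set V)ᶜ) := by simp
  have hb : b ∈ ((↑(∅ : Finset V) : Set V)ᶜ) := by simp
  obtain ⟨w⟩ := hc.preconnected ⟨a, ha⟩ ⟨b, hb⟩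
  cases w with
  | nil => exact absurd rfl hab
  | cons hadj _ => exact ⟨_, _, hadj⟩

/-- Proposition: if `G' ≤ G` are both generically almost-globally rigid in
`ℝ^d`, then so is every graph `G''` with `G' ≤ G'' ≤ G`. -/
theorem GAGR_sandwich {V : Type*} [Fintype V] (d : ℕ) (G G' G'' : SimpleGraph V)
    (h1 : G' ≤ G) (h2 : G' ≤ G'') (h3 : G'' ≤ G)
    (hG : GAGR d G) (hG' : GAGR d G') : GAGR d G'' := by
  obtain ⟨⟨hcard, hconn⟩, hGRR, _⟩ := hG'
  obtain ⟨_, _, hnGGR⟩ := hG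
  refine ⟨⟨hcard, fun S hS => (hconn S hS).mono (fun u v huv => h2 huv)⟩, ?_, ?_⟩
  · -- GRR
    intro e he
    by_cases heG' : e ∈ G'.edgeSet
    · have : G'.deleteEdges {e} ≤ G''.deleteEdges {e} := by
        intro u v huv
        rw [SimpleGraph.deleteEdges_adj] at huv ⊢
        exact ⟨h2 huv.1, huv.2⟩
      exact glr_mono this (hGRR e heG')
    · have hle : G' ≤ G''.deleteEdges {e} := by
        intro u v huv
        rw [SimpleGraph.deleteEdges_adj]
        refine ⟨h2 huv, ?_⟩
        simp only [Set.mem_singleton_iff]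
        rintro rfl
        exact heG' huv
      -- G' is GLR
      have hG'conn := hconn ∅ (by simp)
      have hcard2 : 2 ≤ Fintype.card V := le_trans (by omega) hcard
      obtain ⟨u, v, huv⟩ := has_edge_of_connected hG'conn hcard2
      have hGLR' : GLR d G' := by
        have := hGRR (s(u, v)) (by rwa [SimpleGraph.mem_edgeSet])
        exact glr_mono (SimpleGraph.deleteEdges_le _) this
      exact glr_mono hle hGLR'
  · -- not GGR
    intro hGGR
    apply hnGGR
    intro p hp q heq
    exact hGGR p hp q (equiv_anti h3 heq)


end
end
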